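/- Let G be a finite abelian p-group that is not elementary abelian (i.e., not annihilated by p). Then the Möbius function of the subgroup lattice of G evaluated on (trivial subgroup, G) equals 0. -/
import Mathlib


open scoped BigOperators Classical

/-- If a finite abelian `p`-group is not elementary abelian (not annihilated by `p`),
then the Möbius function of its subgroup lattice evaluated on `(⊥, ⊤)` is `0`. -/
theorem stmt3 (p : ℕ) (hp : p.Prime) (G : Type) [CommGroup G] [Finite G]
    (hpgroup : IsPGroup p G) (hnotelem : ∃ g : G, g ^ p ≠ 1)
    (μ : Subgroup G → Subgroup G → ℤ)
    (hμ : ∀ A B : Subgroup G, A ≤ B →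
      (∑ᶠ C ∈ {C : Subgroup G | A ≤ C ∧ C ≤ B}, μ C B) = if A = B then 1 else 0) :
    μ ⊥ ⊤ = 0 := by
  classical
  have : Fintype G := Fintype.ofFinite G
  have : Fintype (Subgroup G) := Fintype.ofFinite _
  -- Φ : subgroup of p-th powers
  set Φ : Subgroup G := (powMonoidHom p : G →* G).range with hΦdef
  -- Frattini property
  have hfrat : ∀ A : Subgroup G, A ⊔ Φ = ⊤ → A = ⊤ := by
    intro A hA
    set Φk : ℕ → Subgroup G := fun k => (powMonoidHom (p ^ k) : G →* G).range with hΦk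
    have h1 : ∀ g : G, g ∈ A ⊔ Φ := fun g => hA ▸ Subgroup.mem_top g
    have hstep : ∀ k, (∀ g : G, g ∈ A ⊔ Φk k) → ∀ g : G, g ∈ A ⊔ Φk (k + 1) := by
      intro k hk g
      obtain ⟨a, ha, x, ⟨b, rfl⟩, rfl⟩ := Subgroup.mem_sup.mp (hk g)
      obtain ⟨a', ha', y, ⟨c, rfl⟩, rfl⟩ := Subgroup.mem_sup.mp (h1 b)
      refine Subgroup.mem_sup.mpr ⟨a * a' ^ p ^ k, mul_mem ha (pow_mem ha' _), c ^ p ^ (k+1), ⟨c, rfl⟩, ?_⟩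
      simp only [powMonoidHom_apply]
      rw [mul_pow, mul_assoc, ← pow_mul, pow_succ']
    have hall : ∀ k, ∀ g : G, g ∈ A ⊔ Φk k := by
      intro k
      induction k with
      | zero =>
        intro g
        refine Subgroup.mem_sup.mpr ⟨1, one_mem _, g, ⟨g, by simp [powMonoidHom_apply]⟩, one_mul g⟩
      | succ n ih => exact hstep n ih
    haveI := Fact.mk hp
    obtain ⟨n, hn⟩ := IsPGroup.iff_card.mp hpgroup
    have hΦn : Φk n ≤ ⊥ := by
      rintro x ⟨b, rfl⟩
      simp only [powMonoidHom_apply, Subgroup.mem_bot]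
      rw [← hn, Nat.card_eq_fintype_card]
      exact pow_card_eq_one
    have : (⊤ : Subgroup G) ≤ A := by
      intro g _
      obtain ⟨a, ha, b, hb, rfl⟩ := Subgroup.mem_sup.mp (hall n g)
      have hb1 : b = 1 := Subgroup.mem_bot.mp (hΦn hb)
      rwa [hb1, mul_one]
    exact top_le_iff.mp this
  -- finsum → finset sum
  have hμ' : ∀ A B : Subgroup G, A ≤ B →
      (∑ C ∈ Finset.univ.filter (fun C => A ≤ C ∧ C ≤ B), μ C B) = if A = B then 1 else 0 := by
    intro A B hAB
    have := hμ A B hAB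
    rwa [show {C : Subgroup G | A ≤ C ∧ C ≤ B} = ↑(Finset.univ.filter (fun C => A ≤ C ∧ C ≤ B)) by
      ext C; simp, finsum_mem_coe_finset] at this
  -- key claim
  have key : ∀ A : Subgroup G, ¬ Φ ≤ A → μ A ⊤ = 0 := by
    intro A
    induction A using WellFoundedGT.induction with
    | _ A ih =>
      intro hA
      have hAne : A ≠ ⊤ := fun h => hA (h ▸ le_top)
      have e1 := hμ' A ⊤ le_top
      rw [if_neg hAne] at e1
      have hsplit : Finset.univ.filter (fun C => A ≤ C ∧ C ≤ (⊤ : Subgroup G))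
          = insert A (Finset.univ.filter (fun C => A < C)) := by
        ext C
        simp only [Finset.mem_filter, Finset.mem_univ, true_and, Finset.mem_insert]
        constructor
        · rintro ⟨h1, -⟩
          rcases eq_or_lt_of_le h1 with h | h
          · exact Or.inl h.symm
          · exact Or.inr h
        · rintro (rfl | h)
          · exact ⟨le_rfl, le_top⟩
          · exact ⟨h.le, le_top⟩
      have hAnot : A ∉ Finset.univ.filter (fun C => A < C) := by simp
      rw [hsplit, Finset.sum_insert hAnot] at e1
      -- the tail sum equals sum over C ⊇ A ⊔ Φ
      have e2 : (∑ C ∈ Finset.univ.filter (fun C => A < C), μ C ⊤)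
          = ∑ C ∈ Finset.univ.filter (fun C => A ⊔ Φ ≤ C ∧ C ≤ (⊤ : Subgroup G)), μ C ⊤ := by
        rw [← Finset.sum_filter_ne_zero, ← Finset.sum_filter_ne_zero
          (Finset.univ.filter (fun C => A ⊔ Φ ≤ C ∧ C ≤ (⊤ : Subgroup G)))]
        apply Finset.sum_congr _ (fun _ _ => rfl)
        ext C
        simp only [Finset.mem_filter, Finset.mem_univ, true_and]
        constructor
        · rintro ⟨hlt, hne⟩
          have hΦC : Φ ≤ C := by
            by_contra hc
            exact hne (ih C hlt hc)
          exact ⟨⟨sup_le hlt.le hΦC, le_top⟩, hne⟩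
        · rintro ⟨⟨hsup, -⟩, hne⟩
          have hAC : A ≤ C := le_trans le_sup_left hsup
          have hΦC : Φ ≤ C := le_trans le_sup_right hsup
          refine ⟨lt_of_le_of_ne hAC ?_, hne⟩
          rintro rfl
          exact hA hΦC
      have e3 : (∑ C ∈ Finset.univ.filter (fun C => A ⊔ Φ ≤ C ∧ C ≤ (⊤ : Subgroup G)), μ C ⊤) = 0 := by
        rw [hμ' (A ⊔ Φ) ⊤ le_top, if_neg]
        intro h
        exact hA ((hfrat A h) ▸ le_top)
      rw [e2, e3] at e1
      simpa using e1
  apply key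
  obtain ⟨g, hg⟩ := hnotelem
  intro hΦbot
  exact hg (Subgroup.mem_bot.mp (hΦbot ⟨g, rfl⟩))
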